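/- Let L be a rigid group (complete, Hom(L^ω, S_ω) = 0, End L = Inn L ∪ {0}) and G = L^ω. Then G is a Hall group: every group H containing G as a normal subgroup with H/G ≅ G is isomorphic to G. -/

import Mathlib

namespace Stmt19Aux

variable {L : Type*} [Group L] [Nontrivial L]

/-- From trivial center: anything commuting with everything is 1. -/
theorem center_eq_one (hZ : Subgroup.center L = ⊥) {x : L} (h : ∀ y, y * x = x * y) :
    x = 1 := by
  have hx : x ∈ Subgroup.center L := Subgroup.mem_center_iff.mpr h
  rw [hZ] at hx
  exact Subgroup.mem_bot.mp hx

/-- The component homomorphisms of an automorphism of `ℕ → L`. -/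
def F (α : MulAut (ℕ → L)) (i j : ℕ) : L →* L :=
  (Pi.evalMonoidHom (fun _ => L) j).comp
    ((α : (ℕ → L) →* (ℕ → L)).comp (MonoidHom.mulSingle (fun _ => L) i))

theorem F_apply (α : MulAut (ℕ → L)) (i j : ℕ) (x : L) :
    F α i j x = α (Pi.mulSingle i x) j := rfl

theorem exists_F_ne_one (α : MulAut (ℕ → L)) (i : ℕ) : ∃ j, F α i j ≠ 1 := by
  obtain ⟨x, hx⟩ := exists_ne (1 : L)
  have h1 : α (Pi.mulSingle i x) ≠ 1 := by
    intro h
    apply hx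
    have := α.injective (h.trans (map_one α).symm)
    have := congrFun this i
    simpa [Pi.mulSingle_eq_same] using this
  have : ∃ j, α (Pi.mulSingle i x) j ≠ 1 := by
    by_contra hc
    push_neg at hc
    exact h1 (funext fun j => hc j)
  obtain ⟨j, hj⟩ := this
  exact ⟨j, fun h => hj (by rw [← F_apply, h]; rfl)⟩

theorem commute_mulSingle_of_eq_one {z : ℕ → L} {i : ℕ} (hz : z i = 1) (x : L) :
    Commute z (Pi.mulSingle i x) := by
  show z * _ = _ * z
  funext m
  rcases eq_or_ne m i with rfl | hm
  · simp [Pi.mulSingle_eq_same, hz]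
  · simp [Pi.mulSingle_eq_of_ne hm]

theorem commute_mulSingle_left {w : ℕ → L} {j : ℕ} {c : L} (h : c * w j = w j * c) :
    Commute (Pi.mulSingle j c) w := by
  show _ * w = w * _
  funext m
  rcases eq_or_ne m j with rfl | hm
  · simpa [Pi.mulSingle_eq_same] using h
  · simp [Pi.mulSingle_eq_of_ne hm]

/-- Conjugation acts coordinatewise on `mulSingle`. -/
theorem conj_mulSingle (z : ℕ → L) (i : ℕ) (x : L) :
    z * Pi.mulSingle i x * z⁻¹ = Pi.mulSingle i (z i * x * (z i)⁻¹) := by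
  funext m
  rcases eq_or_ne m i with rfl | hm
  · simp [Pi.mulSingle_eq_same]
  · simp [Pi.mulSingle_eq_of_ne hm]

section Rigid

variable (hZ : Subgroup.center L = ⊥)
variable (hEnd : ∀ φ : L →* L, (∃ g : L, ∀ x : L, φ x = g⁻¹ * x * g) ∨ φ = 1)

/-- The coordinate permutation function of an automorphism. -/
noncomputable def sig (α : MulAut (ℕ → L)) (i : ℕ) : ℕ :=
  Classical.choose (exists_F_ne_one α i)

theorem sig_spec (α : MulAut (ℕ → L)) (i : ℕ) : F α i (sig α i) ≠ 1 :=
  Classical.choose_spec (exists_F_ne_one α i)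

include hZ hEnd

/-- Key uniqueness: at most one component of `α` on the `i`-th factor is nontrivial. -/
theorem F_unique (α : MulAut (ℕ → L)) {i j k : ℕ}
    (hj : F α i j ≠ 1) (hk : F α i k ≠ 1) : j = k := by
  by_contra hne
  obtain ⟨g, hg⟩ := (hEnd (F α i j)).resolve_right hj
  obtain ⟨h, hh⟩ := (hEnd (F α i k)).resolve_right hk
  -- Step 1: anything with trivial i-th coordinate maps to something with trivial j-th coordinate
  have step1 : ∀ z : ℕ → L, z i = 1 → α z j = 1 := by
    intro z hz
    apply center_eq_one hZ
    intro y
    have hc : Commute (α z) (α (Pi.mulSingle i (g * y * g⁻¹))) :=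
      ((commute_mulSingle_of_eq_one hz (g * y * g⁻¹)).map (α : (ℕ → L) →* (ℕ → L)))
    have := congrFun hc.eq j
    have hFj : α (Pi.mulSingle i (g * y * g⁻¹)) j = y := by
      rw [← F_apply, hg]; group
    simp only [Pi.mul_apply] at this
    rw [hFj] at this
    exact this.symm
  obtain ⟨a, ha⟩ := exists_ne (1 : L)
  set θ : ℕ → L := Pi.mulSingle j (g⁻¹ * a * g) with hθ
  set u : ℕ → L := α.symm θ with hu
  have hαu : α u = θ := α.apply_symm_apply θ
  have hum : ∀ m, m ≠ i → u m = 1 := by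
    intro m hm
    apply center_eq_one hZ
    intro y
    have hz : (Pi.mulSingle m y : ℕ → L) i = 1 := by
      rw [Pi.mulSingle_eq_of_ne (Ne.symm hm)]
    have h1 : α (Pi.mulSingle m y) j = 1 := step1 _ hz
    have hcomm : Commute θ (α (Pi.mulSingle m y)) := by
      apply commute_mulSingle_left
      rw [h1, mul_one, one_mul]
    have hcomm2 : Commute u (Pi.mulSingle m y) := by
      have := hcomm.map (α.symm : (ℕ → L) →* (ℕ → L))
      simpa [← hu] using this
    have := congrFun hcomm2.eq m
    simp only [Pi.mul_apply, Pi.mulSingle_eq_same] at this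
    exact this.symm
  have hu2 : u = Pi.mulSingle i (u i) := by
    funext m
    rcases eq_or_ne m i with rfl | hm
    · rw [Pi.mulSingle_eq_same]
    · rw [Pi.mulSingle_eq_of_ne hm, hum m hm]
  have hθk : θ k = 1 := Pi.mulSingle_eq_of_ne (Ne.symm hne) _
  have hFk : F α i k (u i) = 1 := by
    rw [F_apply, ← hu2, hαu, hθk]
  rw [hh] at hFk
  have hui : u i = 1 := by
    have : u i * h = h * 1 := by
      have := congrArg (fun t => h * t * h⁻¹) hFk
      simpa [mul_assoc] using this
    simpa using this
  have hθ1 : θ = 1 := by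
    rw [← hαu, hu2, hui]
    simp
  have : g⁻¹ * a * g = 1 := by
    have := congrFun hθ1 j
    simpa [hθ, Pi.mulSingle_eq_same] using this
  apply ha
  have : a * g = g * 1 := by
    have := congrArg (fun t => g * t) this
    simpa [mul_assoc] using this
  simpa using this

theorem eq_sig (α : MulAut (ℕ → L)) {i j : ℕ} (hj : F α i j ≠ 1) : j = sig α i :=
  F_unique hZ hEnd α hj (sig_spec α i)

theorem map_mulSingle (α : MulAut (ℕ → L)) (i : ℕ) (x : L) :
    α (Pi.mulSingle i x) = Pi.mulSingle (sig α i) (F α i (sig α i) x) := by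
  funext m
  rcases eq_or_ne m (sig α i) with rfl | hm
  · rw [Pi.mulSingle_eq_same]; rfl
  · rw [Pi.mulSingle_eq_of_ne hm]
    by_contra hc
    exact hm (eq_sig hZ hEnd α (fun h1 => hc (by rw [← F_apply, h1]; rfl)))

theorem F_sig_injective (α : MulAut (ℕ → L)) (i : ℕ) :
    Function.Injective (F α i (sig α i)) := by
  obtain ⟨g, hg⟩ := (hEnd (F α i (sig α i))).resolve_right (sig_spec α i)
  intro x y hxy
  rw [hg, hg] at hxy
  have : g * (g⁻¹ * x * g) * g⁻¹ = g * (g⁻¹ * y * g) * g⁻¹ := by rw [hxy]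
  simpa [mul_assoc] using this

theorem sig_mul (α β : MulAut (ℕ → L)) (i : ℕ) :
    sig (α * β) i = sig α (sig β i) := by
  symm
  apply eq_sig hZ hEnd
  intro hc
  obtain ⟨x, hx⟩ := exists_ne (1 : L)
  have hβ : F β i (sig β i) x ≠ 1 := fun h =>
    hx (F_sig_injective hZ hEnd β i (h.trans (map_one _).symm))
  have hα : F α (sig β i) (sig α (sig β i)) (F β i (sig β i) x) ≠ 1 := fun h =>
    hβ (F_sig_injective hZ hEnd α (sig β i) (h.trans (map_one _).symm))
  apply hα
  have hval : F (α * β) i (sig α (sig β i)) x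
      = F α (sig β i) (sig α (sig β i)) (F β i (sig β i) x) := by
    rw [F_apply]
    show α (β (Pi.mulSingle i x)) (sig α (sig β i)) = _
    rw [map_mulSingle hZ hEnd β, map_mulSingle hZ hEnd α, Pi.mulSingle_eq_same]
  rw [← hval, hc]
  rfl

theorem sig_one (i : ℕ) : sig (1 : MulAut (ℕ → L)) i = i := by
  symm
  apply eq_sig hZ hEnd
  intro hc
  obtain ⟨x, hx⟩ := exists_ne (1 : L)
  apply hx
  have : F (1 : MulAut (ℕ → L)) i i x = x := by
    rw [F_apply]
    show (Pi.mulSingle i x : ℕ → L) i = x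
    rw [Pi.mulSingle_eq_same]
  rw [hc] at this
  exact this.symm

/-- The coordinate permutation homomorphism `Aut(L^ω) → S_ω`. -/
noncomputable def permHom : MulAut (ℕ → L) →* Equiv.Perm ℕ :=
  MonoidHom.mk'
    (fun α =>
      { toFun := sig α
        invFun := sig α⁻¹
        left_inv := fun i => by
          rw [← sig_mul hZ hEnd α⁻¹ α i, inv_mul_cancel, sig_one hZ hEnd]
        right_inv := fun i => by
          rw [← sig_mul hZ hEnd α α⁻¹ i, mul_inv_cancel, sig_one hZ hEnd] })
    (fun α β => Equiv.ext fun i => sig_mul hZ hEnd α β i)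

theorem permHom_apply (α : MulAut (ℕ → L)) (i : ℕ) :
    permHom hZ hEnd α i = sig α i := rfl

theorem sig_conj (g : ℕ → L) (i : ℕ) : sig (MulAut.conj g) i = i := by
  symm
  apply eq_sig hZ hEnd
  intro hc
  obtain ⟨x, hx⟩ := exists_ne (1 : L)
  apply hx
  have hval : F (MulAut.conj g) i i x = g i * x * (g i)⁻¹ := by
    rw [F_apply, MulAut.conj_apply, conj_mulSingle, Pi.mulSingle_eq_same]
  rw [hc] at hval
  have : g i * x * (g i)⁻¹ = 1 := hval.symm
  have h2 : (g i)⁻¹ * (g i * x * (g i)⁻¹) * g i = (g i)⁻¹ * 1 * g i := by rw [this]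
  simpa [mul_assoc] using h2

/-- An automorphism whose coordinate permutation is trivial is inner. -/
theorem inner_of_sig_id (α : MulAut (ℕ → L)) (hs : ∀ i, sig α i = i) :
    ∃ g : ℕ → L, ∀ z : ℕ → L, α z = g⁻¹ * z * g := by
  have hF : ∀ i, ∃ g : L, ∀ x : L, F α i i x = g⁻¹ * x * g := by
    intro i
    have := sig_spec α i
    rw [hs i] at this
    exact (hEnd (F α i i)).resolve_right this
  choose g hg using hF
  refine ⟨g, fun z => ?_⟩
  have hsingle : ∀ i x, α (Pi.mulSingle i x) = Pi.mulSingle i ((g i)⁻¹ * x * g i) := by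
    intro i x
    rw [map_mulSingle hZ hEnd α, hs i, hg i x]
  funext i
  -- compare conjugation action on the i-th factor
  have key2 : ∀ x : L,
      (g i)⁻¹ * (z i * x * (z i)⁻¹) * g i
        = α z i * ((g i)⁻¹ * x * g i) * (α z i)⁻¹ := by
    intro x
    have h1 : α (z * Pi.mulSingle i x * z⁻¹) = α z * α (Pi.mulSingle i x) * (α z)⁻¹ := by
      simp
    rw [conj_mulSingle z i x, hsingle i (z i * x * (z i)⁻¹), hsingle i x,
      conj_mulSingle (α z) i ((g i)⁻¹ * x * g i)] at h1
    have := congrFun h1 i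
    simpa [Pi.mulSingle_eq_same] using this
  -- compare bare conjugations
  have key3 : ∀ y : L,
      ((g i)⁻¹ * z i * g i) * y * ((g i)⁻¹ * z i * g i)⁻¹
        = α z i * y * (α z i)⁻¹ := by
    intro y
    calc ((g i)⁻¹ * z i * g i) * y * ((g i)⁻¹ * z i * g i)⁻¹
        = (g i)⁻¹ * (z i * (g i * y * (g i)⁻¹) * (z i)⁻¹) * g i := by group
      _ = α z i * ((g i)⁻¹ * (g i * y * (g i)⁻¹) * g i) * (α z i)⁻¹ :=
          key2 (g i * y * (g i)⁻¹)
      _ = α z i * y * (α z i)⁻¹ := by group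
  -- conclude by triviality of the centre
  have hcen : (α z i)⁻¹ * ((g i)⁻¹ * z i * g i) = 1 := by
    apply center_eq_one hZ
    intro y
    calc y * ((α z i)⁻¹ * ((g i)⁻¹ * z i * g i))
        = (α z i)⁻¹ * (α z i * y * (α z i)⁻¹) * ((g i)⁻¹ * z i * g i) := by group
      _ = (α z i)⁻¹ * (((g i)⁻¹ * z i * g i) * y * ((g i)⁻¹ * z i * g i)⁻¹)
            * ((g i)⁻¹ * z i * g i) := by rw [key3]
      _ = (α z i)⁻¹ * ((g i)⁻¹ * z i * g i) * y := by group
  have : α z i = (g i)⁻¹ * z i * g i := inv_mul_eq_one.mp hcen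
  simpa using this

/-- The centre of `ℕ → L` is trivial. -/
theorem center_pi_eq_one {w : ℕ → L} (h : ∀ z : ℕ → L, z * w = w * z) : w = 1 := by
  funext i
  show w i = 1
  apply center_eq_one hZ
  intro y
  have := congrFun (h (Pi.mulSingle i y)) i
  simpa [Pi.mulSingle_eq_same] using this

end Rigid

/-- `G × G ≃* G` for `G = ℕ → L`. -/
noncomputable def prodEquiv : ((ℕ → L) × (ℕ → L)) ≃* (ℕ → L) := by
  refine MulEquiv.trans
    { toEquiv := (Equiv.sumArrowEquivProdArrow ℕ ℕ L).symm
      map_mul' := by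
        intro p q
        funext s
        cases s <;> rfl }
    (MulEquiv.arrowCongr Equiv.natSumNatEquivNat (MulEquiv.refl L))

end Stmt19Aux

/-- Let `L` be rigid (complete, `Hom(L^ω, S_ω) = 0`,
`End L = Inn L ∪ {0}`) and `G = L^ω`. Then `G` is a Hall group: every group `H`
containing a normal subgroup isomorphic to `G` with quotient isomorphic to `G` is
itself isomorphic to `G`. -/
theorem stmt_19 {L : Type*} [Group L] [Nontrivial L]
    (hZ : Subgroup.center L = ⊥)
    (hcomplete : ∀ φ : L ≃* L, ∃ g : L, φ = MulAut.conj g)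
    (hhom : ∀ f : (∀ _ : ℕ, L) →* Equiv.Perm ℕ, f = 1)
    (hEnd : ∀ φ : L →* L, (∃ g : L, ∀ x : L, φ x = g⁻¹ * x * g) ∨ φ = 1)
    {H : Type*} [Group H] (N : Subgroup H) [N.Normal]
    (hN : Nonempty (N ≃* (∀ _ : ℕ, L)))
    (hQ : Nonempty ((H ⧸ N) ≃* (∀ _ : ℕ, L))) :
    Nonempty (H ≃* (∀ _ : ℕ, L)) := by
  classical
  obtain ⟨e⟩ := hN
  obtain ⟨q⟩ := hQ
  -- the conjugation action of `H` on `N ≅ L^ω`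
  let A : H →* MulAut (ℕ → L) :=
    (MulAut.congr e).toMonoidHom.comp MulAut.conjNormal
  have hA : ∀ (h : H) (n : N), A h (e n) = e ⟨h * ↑n * h⁻¹, Subgroup.Normal.conj_mem inferInstance (↑n) n.2 h⟩ := by
    intro h n
    show e ((MulAut.conjNormal h) (e.symm (e n))) = _
    rw [e.symm_apply_apply]
    exact congrArg e (Subtype.ext (MulAut.conjNormal_apply h n))
  -- for `n ∈ N` the action is inner
  have hInnerN : ∀ n : N, A (↑n) = MulAut.conj (e n) := by
    intro n
    refine MulEquiv.ext fun z => ?_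
    show e ((MulAut.conjNormal (↑n : H)) (e.symm z)) = e n * z * (e n)⁻¹
    have h1 : (MulAut.conjNormal (↑n : H)) (e.symm z) = n * e.symm z * n⁻¹ := by
      ext
      simp [MulAut.conjNormal_apply]
    rw [h1]
    simp [map_mul]
  -- the induced coordinate-permutation homomorphism kills `N`, hence all of `H`
  let Φ : H →* Equiv.Perm ℕ := (Stmt19Aux.permHom hZ hEnd).comp A
  have hΦN : ∀ h ∈ N, Φ h = 1 := by
    intro h hh
    ext i
    show Stmt19Aux.sig (A h) i = i
    have : A h = MulAut.conj (e ⟨h, hh⟩) := hInnerN ⟨h, hh⟩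
    rw [this]
    exact Stmt19Aux.sig_conj hZ hEnd _ i
  let Φq : H ⧸ N →* Equiv.Perm ℕ := QuotientGroup.lift N Φ hΦN
  have hΦq : Φq.comp q.symm.toMonoidHom = 1 := hhom _
  have hΦ1 : ∀ h : H, Φ h = 1 := by
    intro h
    have h3 := DFunLike.congr_fun hΦq (q (QuotientGroup.mk h))
    simp only [MonoidHom.comp_apply, MonoidHom.one_apply, MulEquiv.toMonoidHom_eq_coe,
      MonoidHom.coe_coe, MulEquiv.symm_apply_apply] at h3
    exact h3
  have hsig : ∀ (h : H) (i : ℕ), Stmt19Aux.sig (A h) i = i := by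
    intro h i
    have := congrArg (fun (p : Equiv.Perm ℕ) => p i) (hΦ1 h)
    simpa [Φ, Stmt19Aux.permHom_apply] using this
  -- every `h` acts on `N` as conjugation by an element of `N`
  set C : Subgroup H := Subgroup.centralizer (N : Set H) with hC
  have hdecomp : ∀ h : H, ∃ n ∈ N, ∃ c ∈ C, h = n * c := by
    intro h
    obtain ⟨g, hg⟩ := Stmt19Aux.inner_of_sig_id hZ hEnd (A h) (hsig h)
    set m : N := e.symm g with hm
    have hconj : ∀ n : N, h * ↑n * h⁻¹ = (↑m)⁻¹ * ↑n * ↑m := by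
      intro n
      have h1 : A h (e n) = g⁻¹ * e n * g := hg (e n)
      rw [hA h n] at h1
      have h2 : (⟨h * ↑n * h⁻¹, Subgroup.Normal.conj_mem inferInstance (↑n) n.2 h⟩ : N)
          = m⁻¹ * n * m := by
        apply e.injective
        rw [h1, hm]
        simp [map_mul]
      have h3 := congrArg (Subtype.val) h2
      simpa using h3
    refine ⟨(↑m : H)⁻¹, N.inv_mem m.2, ↑m * h, ?_, by group⟩
    rw [hC]
    apply Subgroup.mem_centralizer_iff.mpr
    intro x hx
    have := hconj ⟨x, hx⟩
    calc x * (↑m * h) = ↑m * ((↑m)⁻¹ * x * ↑m) * h := by group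
      _ = ↑m * (h * x * h⁻¹) * h := by rw [← this]
      _ = ↑m * h * x := by group
  -- N ∩ C is trivial
  have hNC : ∀ x : H, x ∈ N → x ∈ C → x = 1 := by
    intro x hxN hxC
    have hx1 : e ⟨x, hxN⟩ = 1 := by
      apply Stmt19Aux.center_pi_eq_one hZ hEnd
      intro z
      have hz : (↑(e.symm z) : H) * x = x * ↑(e.symm z) :=
        Subgroup.mem_centralizer_iff.mp hxC _ (e.symm z).2
      have : e.symm z * ⟨x, hxN⟩ = ⟨x, hxN⟩ * e.symm z := by
        ext; exact hz
      calc z * e ⟨x, hxN⟩ = e (e.symm z * ⟨x, hxN⟩) := by simp [map_mul]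
        _ = e (⟨x, hxN⟩ * e.symm z) := by rw [this]
        _ = e ⟨x, hxN⟩ * z := by simp [map_mul]
    have : (⟨x, hxN⟩ : N) = 1 := by
      apply e.injective
      rw [hx1, map_one]
    exact congrArg Subtype.val this
  -- elements of N and C commute
  have hcomm : ∀ (n : N) (c : C), Commute (↑n : H) (↑c : H) :=
    fun n c => (Subgroup.mem_centralizer_iff.mp c.2 ↑n n.2)
  -- H ≅ N × C
  let f : N × C →* H := MonoidHom.noncommCoprod N.subtype C.subtype hcomm
  have hfbij : Function.Bijective f := by
    constructor
    · rw [injective_iff_map_eq_one]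
      rintro ⟨n, c⟩ hnc
      have h1 : (↑n : H) * ↑c = 1 := hnc
      have h2 : (↑n : H) = (↑c)⁻¹ := eq_inv_of_mul_eq_one_left h1
      have hnC : (↑n : H) ∈ C := h2 ▸ C.inv_mem c.2
      have hn1 : (↑n : H) = 1 := hNC _ n.2 hnC
      have hc1 : (↑c : H) = 1 := by
        rw [hn1, one_mul] at h1; exact h1
      ext
      · exact hn1
      · exact hc1
    · intro h
      obtain ⟨n, hn, c, hc, rfl⟩ := hdecomp h
      exact ⟨(⟨n, hn⟩, ⟨c, hc⟩), rfl⟩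
  -- C ≅ G via the quotient map
  let ψ : C →* (∀ _ : ℕ, L) :=
    (q : H ⧸ N →* (∀ _ : ℕ, L)).comp ((QuotientGroup.mk' N).comp C.subtype)
  have hψbij : Function.Bijective ψ := by
    constructor
    · rw [injective_iff_map_eq_one]
      intro c hc1
      have h1 : q ((↑c : H) : H ⧸ N) = 1 := hc1
      have h2 : ((↑c : H) : H ⧸ N) = 1 := by
        apply q.injective
        rw [h1, map_one]
      have h3 : (↑c : H) ∈ N := (QuotientGroup.eq_one_iff _).mp h2
      ext
      exact hNC _ h3 c.2
    · intro v
      obtain ⟨h, hh⟩ := QuotientGroup.mk_surjective (q.symm v)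
      obtain ⟨n, hn, c, hc, rfl⟩ := hdecomp h
      refine ⟨⟨c, hc⟩, ?_⟩
      have hmk : ((n * c : H) : H ⧸ N) = ((c : H) : H ⧸ N) := by
        rw [QuotientGroup.mk_mul]
        rw [(QuotientGroup.eq_one_iff n).mpr hn, one_mul]
      show q (((c : H) : H ⧸ N)) = v
      rw [← hmk, hh]
      simp
  exact ⟨((MulEquiv.ofBijective f hfbij).symm.trans
    (MulEquiv.prodCongr e (MulEquiv.ofBijective ψ hψbij))).trans Stmt19Aux.prodEquiv⟩
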